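/- Let α be a composition of n and β a composition of m with β ⊆ α, let ℓ = ℓ(β), and fix U ∈ SIT(β). Define φ_U : SIT(α/β) → SIT(α) by: φ_U(T) is the filling of the diagram of α whose restriction to the cells of β is U and whose restriction to the cells of α/β is obtained from T by adding m to every entry. Then φ_U(T) ∈ SIT(α), and for every T ∈ SIT(α/β): inv(φ_U(T)) = inv(T) + inv(U) + inv(α,β), where inv(α,β) = Σ_{i=1}^{ℓ} (α_i − β_i)(β_1 + ⋯ + β_i) + (α_{ℓ+1} + ⋯ + α_{ℓ(α)})(β_1 + ⋯ + β_ℓ). -/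

import Mathlib

open scoped Classical

namespace ImmaculateSkew

/-- `part α i` is the `i`-th part (0-indexed) of the composition `α`, or `0` if out of range. -/
def part (α : List ℕ) (i : ℕ) : ℕ := α.getD i 0

/-- a composition: a list of positive integers -/
def IsComposition (α : List ℕ) : Prop := ∀ x ∈ α, 0 < x

/-- `β ⊆ α` for compositions -/
def SubComp (β α : List ℕ) : Prop :=
  β.length ≤ α.length ∧ ∀ j < β.length, part β j ≤ part α j

/-- cell `(i, j)` (row `i` from the bottom, column `j`, both 0-indexed) lies in the diagram of `α` -/
def InDiagram (α : List ℕ) (c : ℕ × ℕ) : Prop :=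
  c.1 < α.length ∧ c.2 < part α c.1

/-- cell lies in the skew diagram `α/β` -/
def InSkew (α β : List ℕ) (c : ℕ × ℕ) : Prop :=
  InDiagram α c ∧ ¬ InDiagram β c

/-- the finite set of cells of the skew diagram `α/β` -/
noncomputable def skewCells (α β : List ℕ) : Finset (ℕ × ℕ) :=
  (Finset.range α.length ×ˢ Finset.range (α.sum + 1)).filter (InSkew α β)

/-- `N = |α| - |β|` -/
def skewSize (α β : List ℕ) : ℕ := α.sum - β.sum

/-- a filling of the cells of `α/β` using each entry of `E` exactly once, zero off the diagram -/
structure IsStdOn (α β : List ℕ) (E : Finset ℕ) (T : ℕ × ℕ → ℕ) : Prop where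
  zero_off : ∀ c, ¬ InSkew α β c → T c = 0
  mem : ∀ c, InSkew α β c → T c ∈ E
  inj : ∀ c c', InSkew α β c → InSkew α β c' → T c = T c' → c = c'
  surj : ∀ v ∈ E, ∃ c, InSkew α β c ∧ T c = v

/-- row entries strictly increase left to right -/
def RowsStrict (α β : List ℕ) (T : ℕ × ℕ → ℕ) : Prop :=
  ∀ i j j', j < j' → InSkew α β (i, j) → InSkew α β (i, j') → T (i, j) < T (i, j')

/-- row entries weakly increase left to right -/
def RowsWeak (α β : List ℕ) (T : ℕ × ℕ → ℕ) : Prop :=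
  ∀ i j j', j < j' → InSkew α β (i, j) → InSkew α β (i, j') → T (i, j) ≤ T (i, j')

/-- all column entries strictly increase bottom to top -/
def ColsStrict (α β : List ℕ) (T : ℕ × ℕ → ℕ) : Prop :=
  ∀ i i' j, i < i' → InSkew α β (i, j) → InSkew α β (i', j) → T (i, j) < T (i', j)

/-- all column entries weakly increase bottom to top -/
def ColsWeak (α β : List ℕ) (T : ℕ × ℕ → ℕ) : Prop :=
  ∀ i i' j, i < i' → InSkew α β (i, j) → InSkew α β (i', j) → T (i, j) ≤ T (i', j)

/-- the column-1 entries (those in `α/β`) strictly increase bottom to top -/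
def FirstColStrict (α β : List ℕ) (T : ℕ × ℕ → ℕ) : Prop :=
  ∀ i i', i < i' → InSkew α β (i, 0) → InSkew α β (i', 0) → T (i, 0) < T (i', 0)

/-- the column-1 entries (those in `α/β`) weakly increase bottom to top -/
def FirstColWeak (α β : List ℕ) (T : ℕ × ℕ → ℕ) : Prop :=
  ∀ i i', i < i' → InSkew α β (i, 0) → InSkew α β (i', 0) → T (i, 0) ≤ T (i', 0)

/-- standard immaculate tableau of shape `α/β` with entry set `E` -/
def IsSITOn (α β : List ℕ) (E : Finset ℕ) (T : ℕ × ℕ → ℕ) : Prop :=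
  IsStdOn α β E T ∧ RowsStrict α β T ∧ FirstColStrict α β T

/-- standard immaculate tableau of shape `α/β` (entries `1, …, N`) -/
def IsSIT (α β : List ℕ) (T : ℕ × ℕ → ℕ) : Prop :=
  IsSITOn α β (Finset.Icc 1 (skewSize α β)) T

/-- standard extended tableau: all columns increase bottom to top -/
def IsSET (α β : List ℕ) (T : ℕ × ℕ → ℕ) : Prop :=
  IsSIT α β T ∧ ColsStrict α β T

/-- the four descent-set variants -/
inductive Variant | dI | rdI | Astar | Abar

/-- `rowRel a r r'`: the relation required between the row `r` containing `i` and the row `r'`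
containing `i+1` for `i` to be an `a`-descent -/
def rowRel : Variant → ℕ → ℕ → Prop
  | .dI    => fun r r' => r < r'
  | .rdI   => fun r r' => r' ≤ r
  | .Astar => fun r r' => r' < r
  | .Abar  => fun r r' => r ≤ r'

/-- the `a`-descent set of a tableau -/
noncomputable def Des (a : Variant) (α β : List ℕ) (T : ℕ × ℕ → ℕ) : Finset ℕ :=
  (Finset.Icc 1 (skewSize α β - 1)).filter fun k =>
    ∃ c c', InSkew α β c ∧ InSkew α β c' ∧ T c = k ∧ T c' = k + 1 ∧ rowRel a c.1 c'.1

/-- interchange the entries `i` and `i+1` -/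
def swapEntries (i : ℕ) (T : ℕ × ℕ → ℕ) : ℕ × ℕ → ℕ :=
  fun c => if T c = i then i + 1 else if T c = i + 1 then i else T c

/-- the 0-Hecke operator `π_i^a` on `SIT(α/β) ∪ {0}` (the zero function plays the role of `0`) -/
noncomputable def piOp (a : Variant) (α β : List ℕ) (i : ℕ) (T : ℕ × ℕ → ℕ) : ℕ × ℕ → ℕ :=
  if i ∈ Des a α β T then
    (if IsSIT α β (swapEntries i T) then swapEntries i T else fun _ => 0)
  else T

/-- the fundamental quasisymmetric function `F_{comp(D)}` for `D ⊆ {1,…,N-1}`, as a power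
series in the variables `x_1, x_2, …` (variable `x_n` is `X n`; `x_0` is unused) -/
noncomputable def Fund (N : ℕ) (D : Finset ℕ) : MvPowerSeries ℕ ℚ :=
  fun d => (Nat.card {f : Fin N → ℕ //
    (∀ j, 1 ≤ f j) ∧
    (∀ j k : Fin N, j ≤ k → f j ≤ f k) ∧
    (∀ (j : ℕ) (_ : 1 ≤ j) (h2 : j < N), j ∈ D → f ⟨j - 1, by omega⟩ < f ⟨j, h2⟩) ∧
    (∑ j, Finsupp.single (f j) 1) = d} : ℚ)

/-- the generating function `Σ_T x^T` over all fillings of the given cells with positive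
integers satisfying the predicate `P` (and equal to `0` off the given cells) -/
noncomputable def genF (cs : Finset (ℕ × ℕ)) (P : (ℕ × ℕ → ℕ) → Prop) :
    MvPowerSeries ℕ ℚ :=
  fun d => (Nat.card {T : ℕ × ℕ → ℕ //
    (∀ c, c ∉ cs → T c = 0) ∧ (∀ c ∈ cs, 1 ≤ T c) ∧ P T ∧
    (∑ c ∈ cs, Finsupp.single (T c) 1) = d} : ℚ)

/-- complete homogeneous symmetric function `h_r` -/
noncomputable def hFun (r : ℕ) : MvPowerSeries ℕ ℚ :=
  fun d => (Nat.card {f : Fin r → ℕ //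
    (∀ j, 1 ≤ f j) ∧ (∀ j k : Fin r, j ≤ k → f j ≤ f k) ∧
    (∑ j, Finsupp.single (f j) 1) = d} : ℚ)

/-- elementary symmetric function `e_r` -/
noncomputable def eFun (r : ℕ) : MvPowerSeries ℕ ℚ :=
  fun d => (Nat.card {f : Fin r → ℕ //
    (∀ j, 1 ≤ f j) ∧ (∀ j k : Fin r, j < k → f j < f k) ∧
    (∑ j, Finsupp.single (f j) 1) = d} : ℚ)

/-- send a filling to the corresponding basis vector of the free `ℚ`-vector space on
`SIT(α/β)`, or to the zero vector if it is not a standard immaculate tableau -/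
noncomputable def toBasis (α β : List ℕ) (U : ℕ × ℕ → ℕ) :
    ({T : ℕ × ℕ → ℕ // IsSIT α β T} →₀ ℚ) :=
  if h : IsSIT α β U then Finsupp.single ⟨U, h⟩ 1 else 0

/-- the linear extension of `π_i^a` to the free `ℚ`-vector space on `SIT(α/β)` -/
noncomputable def piLin (a : Variant) (α β : List ℕ) (i : ℕ) :
    ({T : ℕ × ℕ → ℕ // IsSIT α β T} →₀ ℚ) →ₗ[ℚ]
      ({T : ℕ × ℕ → ℕ // IsSIT α β T} →₀ ℚ) :=
  Finsupp.lift _ ℚ _ (fun T => toBasis α β (piOp a α β i T.1))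

/-- one step: the tableau `T` is obtained from `S` by applying one operator `π_i^a` -/
def stepRel (a : Variant) (α β : List ℕ) (S T : ℕ × ℕ → ℕ) : Prop :=
  IsSIT α β T ∧ ∃ i, 1 ≤ i ∧ i ≤ skewSize α β - 1 ∧ piOp a α β i S = T

/-- `T` is obtained from `S` by applying a (possibly empty) sequence of operators `π_i^a`,
all intermediate results being tableaux -/
def reach (a : Variant) (α β : List ℕ) : (ℕ × ℕ → ℕ) → (ℕ × ℕ → ℕ) → Prop :=
  Relation.ReflTransGen (stepRel a α β)

/-- the number of skew cells of `α/β` strictly above row `i` other than column-1 cells -/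
noncomputable def aboveCount (α β : List ℕ) (i : ℕ) : ℕ :=
  ∑ i' ∈ Finset.Ico (i + 1) α.length,
    (if i' < β.length then part α i' - part β i' else part α i' - 1)

/-- the tableau `S^0_{α/β}`: the column-1 cells of `α/β` are filled with `1, …, ℓ(α)-ℓ(β)`
bottom to top, then the remaining cells are filled row by row, top to bottom, left to right,
with consecutive integers -/
noncomputable def S0 (α β : List ℕ) : ℕ × ℕ → ℕ :=
  fun c =>
    if InSkew α β c then
      if c.2 = 0 ∧ β.length ≤ c.1 then c.1 - β.length + 1
      else (α.length - β.length) + aboveCount α β c.1 +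
        (if c.1 < β.length then c.2 - part β c.1 + 1 else c.2)
    else 0

/-- the row superstandard tableau `S^{row}_{α/β}`: rows filled left to right with `1, 2, …, N`,
bottom row first -/
noncomputable def Srow (α β : List ℕ) : ℕ × ℕ → ℕ :=
  fun c =>
    if InSkew α β c then
      (∑ i' ∈ Finset.range c.1, (part α i' - part β i')) + (c.2 - part β c.1 + 1)
    else 0

/-- `c` is read before `c'` in the reading word (rows top to bottom, right to left in a row) -/
def readBefore (c c' : ℕ × ℕ) : Prop :=
  c'.1 < c.1 ∨ (c.1 = c'.1 ∧ c'.2 < c.2)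

/-- the number of inversions of the reading word of a tableau of shape `α/β` -/
noncomputable def invNum (α β : List ℕ) (T : ℕ × ℕ → ℕ) : ℕ :=
  ((skewCells α β ×ˢ skewCells α β).filter
    (fun p => readBefore p.1 p.2 ∧ T p.2 < T p.1)).card

/-- `φ_U(T)`: fill the cells of `β` by `U` and those of `α/β` by `T` with all entries of `T`
shifted up by `m = |β|` -/
noncomputable def phiU (α β : List ℕ) (U T : ℕ × ℕ → ℕ) : ℕ × ℕ → ℕ :=
  fun c => if InDiagram β c then U c else if InSkew α β c then T c + β.sum else 0

/-- restriction `T_{≤ m}` of `T` to entries `≤ m` -/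
def restrLe (m : ℕ) (T : ℕ × ℕ → ℕ) : ℕ × ℕ → ℕ :=
  fun c => if T c ≤ m then T c else 0

/-- restriction `T_{> m}` of `T` to entries `> m` -/
def restrGt (m : ℕ) (T : ℕ × ℕ → ℕ) : ℕ × ℕ → ℕ :=
  fun c => if m < T c then T c else 0

/-- standardisation `std(T_{>m})`: keep the entries `> m` and subtract `m` from each -/
def stdGt (m : ℕ) (T : ℕ × ℕ → ℕ) : ℕ × ℕ → ℕ :=
  fun c => if m < T c then T c - m else 0

/-- `T ∈ X_{α,β}`: `T ∈ SIT(α)` and the entries `> |β|` of `T` occupy exactly the cells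
of `α/β` -/
def memX (α β : List ℕ) (T : ℕ × ℕ → ℕ) : Prop :=
  IsSIT α [] T ∧ ∀ c, InDiagram α c → (β.sum < T c ↔ ¬ InDiagram β c)

section Aux

lemma sum_eq_sum_part (γ : List ℕ) : γ.sum = ∑ i ∈ Finset.range γ.length, part γ i := by
  induction γ with
  | nil => simp [part]
  | cons a l ih =>
    rw [List.sum_cons, List.length_cons, Finset.sum_range_succ']
    simp [part, ih, Nat.add_comm]

lemma part_take (γ : List ℕ) (k i : ℕ) (h : i < k) : part (γ.take k) i = part γ i := by
  simp [part, List.getD_eq_getElem?_getD, List.getElem?_take, h]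

lemma part_drop (γ : List ℕ) (k i : ℕ) : part (γ.drop k) i = part γ (k + i) := by
  simp [part, List.getD_eq_getElem?_getD, List.getElem?_drop]

lemma part_eq_zero (γ : List ℕ) (i : ℕ) (h : γ.length ≤ i) : part γ i = 0 :=
  List.getD_eq_default _ _ h

lemma part_le_sum (γ : List ℕ) (i : ℕ) : part γ i ≤ γ.sum := by
  by_cases h : i < γ.length
  · rw [sum_eq_sum_part]
    exact Finset.single_le_sum (f := fun j => part γ j) (fun _ _ => Nat.zero_le _)
      (Finset.mem_range.2 h)
  · rw [part_eq_zero γ i (Nat.le_of_not_lt h)]; exact Nat.zero_le _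

lemma part_pos (γ : List ℕ) (hγ : IsComposition γ) (i : ℕ) (h : i < γ.length) :
    0 < part γ i := by
  have : part γ i = γ[i] := by
    simp [part, List.getD_eq_getElem?_getD, List.getElem?_eq_getElem h]
  rw [this]; exact hγ _ (List.getElem_mem h)

lemma take_sum (γ : List ℕ) (k : ℕ) :
    (γ.take k).sum = ∑ i ∈ Finset.range (min k γ.length), part γ i := by
  rw [sum_eq_sum_part, List.length_take]
  exact Finset.sum_congr rfl fun i hi => part_take γ k i (by simp at hi; omega)

lemma drop_sum (γ : List ℕ) (k : ℕ) :
    (γ.drop k).sum = ∑ i ∈ Finset.Ico k γ.length, part γ i := by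
  rw [sum_eq_sum_part, List.length_drop, Finset.sum_Ico_eq_sum_range]
  exact Finset.sum_congr rfl fun i _ => part_drop γ k i

lemma inDiagram_pair {γ : List ℕ} {i j : ℕ} :
    InDiagram γ (i, j) ↔ i < γ.length ∧ j < part γ i := Iff.rfl

lemma mem_skewCells {α β : List ℕ} {c : ℕ × ℕ} : c ∈ skewCells α β ↔ InSkew α β c := by
  simp only [skewCells, Finset.mem_filter, Finset.mem_product, Finset.mem_range,
    and_iff_right_iff_imp]
  intro h
  exact ⟨h.1.1, lt_of_lt_of_le h.1.2 (le_trans (part_le_sum α c.1) (Nat.le_succ _))⟩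

lemma inSkew_nil {α : List ℕ} {c : ℕ × ℕ} : InSkew α [] c ↔ InDiagram α c := by
  simp [InSkew, InDiagram, part]

lemma diag_mono {α β : List ℕ} (hsub : SubComp β α) {c : ℕ × ℕ}
    (h : InDiagram β c) : InDiagram α c :=
  ⟨lt_of_lt_of_le h.1 hsub.1, lt_of_lt_of_le h.2 (hsub.2 _ h.1)⟩

lemma cardDiag (γ : List ℕ) : (skewCells γ []).card = γ.sum := by
  classical
  rw [skewCells, Finset.card_filter, Finset.sum_product]
  have key : ∀ i ∈ Finset.range γ.length,
      (∑ j ∈ Finset.range (γ.sum + 1), if InSkew γ [] (i, j) then 1 else 0) = part γ i := by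
    intro i hi
    rw [Finset.mem_range] at hi
    rw [← Finset.card_filter]
    have : (Finset.range (γ.sum + 1)).filter (fun j => InSkew γ [] (i, j)) =
        Finset.range (part γ i) := by
      ext j
      simp only [Finset.mem_filter, Finset.mem_range, inSkew_nil, InDiagram]
      constructor
      · rintro ⟨_, _, h⟩; exact h
      · intro h
        exact ⟨lt_of_lt_of_le (lt_of_lt_of_le h (part_le_sum γ i)) (Nat.le_succ _), hi, h⟩
    rw [this, Finset.card_range]
  rw [Finset.sum_congr rfl key, ← sum_eq_sum_part]

lemma cardDiagLe (γ : List ℕ) (i : ℕ) :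
    ((skewCells γ []).filter (fun c => c.1 ≤ i)).card = (γ.take (i + 1)).sum := by
  classical
  rw [← cardDiag (γ.take (i + 1))]
  congr 1
  ext c
  simp only [Finset.mem_filter, mem_skewCells, inSkew_nil, InDiagram, List.length_take]
  constructor
  · rintro ⟨⟨h1, h2⟩, h3⟩
    exact ⟨by omega, by rw [part_take _ _ _ (by omega)]; exact h2⟩
  · rintro ⟨h1, h2⟩
    rw [part_take _ _ _ (by omega)] at h2
    exact ⟨⟨by omega, h2⟩, by omega⟩

lemma lemA {α β : List ℕ} {i j : ℕ} (hc : InSkew α β (i, j)) :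
    (∑ c' ∈ skewCells β [], if readBefore (i, j) c' then 1 else 0) =
      (if i < β.length then (β.take (i + 1)).sum else β.sum) := by
  classical
  rw [← Finset.card_filter]
  by_cases hi : i < β.length
  · rw [if_pos hi, ← cardDiagLe β i]
    congr 1
    ext c'
    simp only [Finset.mem_filter, mem_skewCells, inSkew_nil, and_congr_right_iff]
    intro hc'
    have hji : part β i ≤ j := by
      by_contra h
      exact hc.2 ⟨hi, show j < part β i by omega⟩
    constructor
    · rintro (h | ⟨h1, h2⟩) <;> omega
    · intro h
      rcases Nat.lt_or_ge c'.1 i with h' | h'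
      · exact Or.inl h'
      · have hci : c'.1 = i := by omega
        refine Or.inr ⟨hci.symm, ?_⟩
        have h2 := hc'.2
        rw [hci] at h2
        show c'.2 < j
        omega
  · rw [if_neg hi, ← cardDiag β]
    congr 1
    rw [Finset.filter_true_of_mem]
    intro c' hc'
    rw [mem_skewCells, inSkew_nil] at hc'
    simp only [readBefore]
    have := hc'.1
    omega

lemma rowFilter {α β : List ℕ} (hsub : SubComp β α) {i : ℕ} (hi : i < α.length) :
    (Finset.range (α.sum + 1)).filter (fun j => InSkew α β (i, j)) =
      Finset.Ico (part β i) (part α i) := by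
  classical
  refine Finset.ext fun j => ?_
  have h1 : part α i ≤ α.sum := part_le_sum α i
  rw [Finset.mem_filter]
  simp only [Finset.mem_filter, Finset.mem_range, Finset.mem_Ico, InSkew, InDiagram]
  by_cases h2 : i < β.length
  · have h3 := hsub.2 i h2
    constructor
    · rintro ⟨_, ⟨_, hj⟩, hn⟩
      refine ⟨?_, hj⟩
      by_contra h
      exact hn ⟨h2, by omega⟩
    · rintro ⟨hb, hj⟩
      exact ⟨by omega, ⟨hi, hj⟩, fun h => by omega⟩
  · have h3 : part β i = 0 := part_eq_zero β i (by omega)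
    constructor
    · rintro ⟨_, ⟨_, hj⟩, _⟩
      exact ⟨by omega, hj⟩
    · rintro ⟨_, hj⟩
      exact ⟨by omega, ⟨hi, hj⟩, fun h => by omega⟩

lemma mixedCount {α β : List ℕ} (hsub : SubComp β α) :
    ((skewCells α β ×ˢ skewCells β []).filter (fun p => readBefore p.1 p.2)).card =
      (∑ i ∈ Finset.range β.length, (part α i - part β i) * (β.take (i + 1)).sum) +
        (α.drop β.length).sum * β.sum := by
  classical
  set g : ℕ → ℕ := fun i => if i < β.length then (β.take (i + 1)).sum else β.sum with hg
  rw [Finset.card_filter, Finset.sum_product]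
  have hA : (∑ c ∈ skewCells α β, ∑ c' ∈ skewCells β [],
      if readBefore c c' then 1 else 0) = ∑ c ∈ skewCells α β, g c.1 := by
    refine Finset.sum_congr rfl fun c hc => ?_
    rw [mem_skewCells] at hc
    obtain ⟨i, j⟩ := c
    exact lemA hc
  rw [hA, skewCells, Finset.sum_filter, Finset.sum_product]
  have h2 : ∀ i ∈ Finset.range α.length,
      (∑ j ∈ Finset.range (α.sum + 1), if InSkew α β (i, j) then g i else 0) =
        (part α i - part β i) * g i := by
    intro i hi
    rw [Finset.mem_range] at hi
    rw [← Finset.sum_filter, rowFilter hsub hi, Finset.sum_const, Nat.card_Ico, smul_eq_mul]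
  rw [Finset.sum_congr rfl h2, ← Finset.sum_range_add_sum_Ico _ hsub.1]
  congr 1
  · exact Finset.sum_congr rfl fun i hi => by
      rw [Finset.mem_range] at hi
      rw [hg]; simp only [if_pos hi]
  · rw [drop_sum, Finset.sum_mul]
    exact Finset.sum_congr rfl fun i hi => by
      rw [Finset.mem_Ico] at hi
      rw [hg]; simp only [if_neg (by omega : ¬ i < β.length)]
      rw [part_eq_zero β i (by omega), Nat.sub_zero]

end Aux

/-- for a fixed `U ∈ SIT(β)`, the map `φ_U : SIT(α/β) → SIT(α)` is
well defined and `inv(φ_U(T)) = inv(T) + inv(U) + inv(α,β)`. -/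
theorem skew_inversions_phi (α β : List ℕ) (n m : ℕ)
    (hα : IsComposition α) (hβ : IsComposition β)
    (hn : α.sum = n) (hm : β.sum = m) (hsub : SubComp β α)
    (U : ℕ × ℕ → ℕ) (hU : IsSIT β [] U) (T : ℕ × ℕ → ℕ) (hT : IsSIT α β T) :
    IsSIT α [] (phiU α β U T) ∧
    invNum α [] (phiU α β U T) =
      invNum α β T + invNum β [] U +
        ((∑ i ∈ Finset.range β.length,
            (part α i - part β i) * (β.take (i + 1)).sum) +
          (α.drop β.length).sum * β.sum) := by
  classical
  subst hn; subst hm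
  obtain ⟨Ustd, Urow, Ucol⟩ := hU
  obtain ⟨Tstd, Trow, Tcol⟩ := hT
  have hsizeβ : skewSize β [] = β.sum := by simp [skewSize]
  have hsizeα : skewSize α [] = α.sum := by simp [skewSize]
  have hUb : ∀ c, InDiagram β c → 1 ≤ U c ∧ U c ≤ β.sum := by
    intro c hc
    have h := Ustd.mem c (inSkew_nil.2 hc)
    rw [hsizeβ, Finset.mem_Icc] at h
    exact h
  have hTb : ∀ c, InSkew α β c → 1 ≤ T c ∧ T c ≤ α.sum - β.sum := by
    intro c hc
    have h := Tstd.mem c hc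
    simp only [skewSize, Finset.mem_Icc] at h
    exact h
  set φ := phiU α β U T with hφ
  have hφβ : ∀ c, InDiagram β c → φ c = U c := by
    intro c hc; simp [hφ, phiU, hc]
  have hφs : ∀ c, InSkew α β c → φ c = T c + β.sum := by
    intro c hc; simp [hφ, phiU, hc, hc.2]
  have hφ0 : ∀ c, ¬ InDiagram α c → φ c = 0 := by
    intro c hc
    have h1 : ¬ InDiagram β c := fun h => hc (diag_mono hsub h)
    have h2 : ¬ InSkew α β c := fun h => hc h.1
    simp [hφ, phiU, h1, h2]
  have hmn : β.sum ≤ α.sum := by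
    rw [sum_eq_sum_part β, sum_eq_sum_part α]
    calc ∑ i ∈ Finset.range β.length, part β i
        ≤ ∑ i ∈ Finset.range β.length, part α i :=
          Finset.sum_le_sum (fun i hi => hsub.2 i (Finset.mem_range.1 hi))
      _ ≤ ∑ i ∈ Finset.range α.length, part α i :=
          Finset.sum_le_sum_of_subset (Finset.range_subset_range.2 hsub.1)
  constructor
  · -- φ is a SIT of shape α
    refine ⟨⟨?_, ?_, ?_, ?_⟩, ?_, ?_⟩
    · -- zero_off
      intro c hc
      rw [inSkew_nil] at hc
      exact hφ0 c hc
    · -- mem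
      intro c hc
      rw [inSkew_nil] at hc
      rw [hsizeα, Finset.mem_Icc]
      by_cases hb : InDiagram β c
      · rw [hφβ c hb]
        have := hUb c hb
        omega
      · rw [hφs c ⟨hc, hb⟩]
        have := hTb c ⟨hc, hb⟩
        omega
    · -- inj
      intro c c' hc hc' heq
      rw [inSkew_nil] at hc hc'
      by_cases hb : InDiagram β c <;> by_cases hb' : InDiagram β c'
      · exact Ustd.inj c c' (inSkew_nil.2 hb) (inSkew_nil.2 hb')
          (by rw [hφβ c hb, hφβ c' hb'] at heq; exact heq)
      · exfalso
        rw [hφβ c hb, hφs c' ⟨hc', hb'⟩] at heq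
        have h1 := hUb c hb
        have h2 := hTb c' ⟨hc', hb'⟩
        omega
      · exfalso
        rw [hφs c ⟨hc, hb⟩, hφβ c' hb'] at heq
        have h1 := hUb c' hb'
        have h2 := hTb c ⟨hc, hb⟩
        omega
      · refine Tstd.inj c c' ⟨hc, hb⟩ ⟨hc', hb'⟩ ?_
        rw [hφs c ⟨hc, hb⟩, hφs c' ⟨hc', hb'⟩] at heq
        omega
    · -- surj
      intro v hv
      rw [hsizeα, Finset.mem_Icc] at hv
      by_cases hvm : v ≤ β.sum
      · obtain ⟨c, hc, hcv⟩ := Ustd.surj v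
          (by rw [hsizeβ, Finset.mem_Icc]; exact ⟨hv.1, hvm⟩)
        rw [inSkew_nil] at hc
        exact ⟨c, inSkew_nil.2 (diag_mono hsub hc), by rw [hφβ c hc, hcv]⟩
      · obtain ⟨c, hc, hcv⟩ := Tstd.surj (v - β.sum)
          (by simp only [skewSize, Finset.mem_Icc]; omega)
        refine ⟨c, inSkew_nil.2 hc.1, ?_⟩
        rw [hφs c hc, hcv]
        omega
    · -- rows strict
      intro i j j' hjj hc hc'
      rw [inSkew_nil] at hc hc'
      by_cases hb : InDiagram β (i, j) <;> by_cases hb' : InDiagram β (i, j')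
      · rw [hφβ _ hb, hφβ _ hb']
        exact Urow i j j' hjj (inSkew_nil.2 hb) (inSkew_nil.2 hb')
      · rw [hφβ _ hb, hφs _ ⟨hc', hb'⟩]
        have h1 := hUb _ hb
        have h2 := hTb _ ⟨hc', hb'⟩
        omega
      · exfalso
        apply hb
        rw [inDiagram_pair] at hb' ⊢
        exact ⟨hb'.1, by omega⟩
      · rw [hφs _ ⟨hc, hb⟩, hφs _ ⟨hc', hb'⟩]
        have := Trow i j j' hjj ⟨hc, hb⟩ ⟨hc', hb'⟩
        omega
    · -- first column strict
      intro i i' hii hc hc'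
      rw [inSkew_nil] at hc hc'
      by_cases hb : InDiagram β (i, 0) <;> by_cases hb' : InDiagram β (i', 0)
      · rw [hφβ _ hb, hφβ _ hb']
        exact Ucol i i' hii (inSkew_nil.2 hb) (inSkew_nil.2 hb')
      · rw [hφβ _ hb, hφs _ ⟨hc', hb'⟩]
        have h1 := hUb _ hb
        have h2 := hTb _ ⟨hc', hb'⟩
        omega
      · exfalso
        apply hb
        rw [inDiagram_pair] at hb' ⊢
        exact ⟨by omega, part_pos β hβ i (by omega)⟩
      · rw [hφs _ ⟨hc, hb⟩, hφs _ ⟨hc', hb'⟩]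
        have := Tcol i i' hii ⟨hc, hb⟩ ⟨hc', hb'⟩
        omega
  · -- inversion count
    have hCα : skewCells α [] = skewCells β [] ∪ skewCells α β := by
      ext c
      simp only [Finset.mem_union, mem_skewCells, inSkew_nil]
      constructor
      · intro h
        by_cases hb : InDiagram β c
        · exact Or.inl hb
        · exact Or.inr ⟨h, hb⟩
      · rintro (h | h)
        exacts [diag_mono hsub h, h.1]
    have hdisj : Disjoint (skewCells β []) (skewCells α β) := by
      rw [Finset.disjoint_left]
      intro c h1 h2
      rw [mem_skewCells, inSkew_nil] at h1
      rw [mem_skewCells] at h2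
      exact h2.2 h1
    have hdfst : ∀ {A B C D : Finset (ℕ × ℕ)}, Disjoint A C → Disjoint (A ×ˢ B) (C ×ˢ D) := by
      intro A B C D h
      rw [Finset.disjoint_left] at h ⊢
      intro p hp hp'
      rw [Finset.mem_product] at hp hp'
      exact h hp.1 hp'.1
    have hdsnd : ∀ {A B C D : Finset (ℕ × ℕ)}, Disjoint B D → Disjoint (A ×ˢ B) (C ×ˢ D) := by
      intro A B C D h
      rw [Finset.disjoint_left] at h ⊢
      intro p hp hp'
      rw [Finset.mem_product] at hp hp'
      exact h hp.2 hp'.2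
    set P : (ℕ × ℕ) × (ℕ × ℕ) → Prop := fun p => readBefore p.1 p.2 ∧ φ p.2 < φ p.1 with hP
    set Cβ := skewCells β [] with hCβ
    set Cs := skewCells α β with hCs
    have e1 : (Cβ ×ˢ Cβ).filter P = (skewCells β [] ×ˢ skewCells β []).filter
        (fun p => readBefore p.1 p.2 ∧ U p.2 < U p.1) := by
      refine Finset.filter_congr fun p hp => ?_
      rw [Finset.mem_product, hCβ, mem_skewCells, mem_skewCells, inSkew_nil, inSkew_nil] at hp
      simp only [hP]
      rw [hφβ _ hp.1, hφβ _ hp.2]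
    have e2 : (Cβ ×ˢ Cs).filter P = ∅ := by
      rw [Finset.filter_eq_empty_iff]
      intro p hp
      rw [Finset.mem_product, hCβ, hCs, mem_skewCells, mem_skewCells, inSkew_nil] at hp
      simp only [hP]
      rintro ⟨-, hlt⟩
      rw [hφβ _ hp.1, hφs _ hp.2] at hlt
      have h1 := hUb _ hp.1
      have h2 := hTb _ hp.2
      omega
    have e3 : (Cs ×ˢ Cβ).filter P = (Cs ×ˢ Cβ).filter (fun p => readBefore p.1 p.2) := by
      refine Finset.filter_congr fun p hp => ?_
      rw [Finset.mem_product, hCβ, hCs, mem_skewCells, mem_skewCells, inSkew_nil] at hp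
      simp only [hP]
      have hlt : φ p.2 < φ p.1 := by
        rw [hφβ _ hp.2, hφs _ hp.1]
        have h1 := hUb _ hp.2
        have h2 := hTb _ hp.1
        omega
      exact and_iff_left hlt
    have e4 : (Cs ×ˢ Cs).filter P = (skewCells α β ×ˢ skewCells α β).filter
        (fun p => readBefore p.1 p.2 ∧ T p.2 < T p.1) := by
      refine Finset.filter_congr fun p hp => ?_
      rw [Finset.mem_product, hCs, mem_skewCells, mem_skewCells] at hp
      simp only [hP]
      rw [hφs _ hp.1, hφs _ hp.2, Nat.add_lt_add_iff_right]
    have expand : invNum α [] φ =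
        ((Cβ ×ˢ Cβ).filter P ∪ (Cβ ×ˢ Cs).filter P ∪
          ((Cs ×ˢ Cβ).filter P ∪ (Cs ×ˢ Cs).filter P)).card := by
      rw [invNum, hCα, Finset.union_product, Finset.product_union, Finset.product_union,
        Finset.filter_union, Finset.filter_union, Finset.filter_union]
    rw [expand]
    rw [Finset.card_union_of_disjoint
        (Finset.disjoint_union_left.2
          ⟨Finset.disjoint_union_right.2
            ⟨Finset.disjoint_filter_filter (hdfst hdisj),
             Finset.disjoint_filter_filter (hdfst hdisj)⟩,
           Finset.disjoint_union_right.2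
            ⟨Finset.disjoint_filter_filter (hdsnd hdisj.symm),
             Finset.disjoint_filter_filter (hdfst hdisj)⟩⟩),
      Finset.card_union_of_disjoint (Finset.disjoint_filter_filter (hdsnd hdisj)),
      Finset.card_union_of_disjoint (Finset.disjoint_filter_filter (hdsnd hdisj))]
    rw [e1, e2, e3, e4]
    rw [Finset.card_empty, ← invNum, ← invNum, mixedCount hsub]
    ring


end ImmaculateSkew
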